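/- Let J be an index type and let (V_j)_{j ∈ J} be a family of valuation rings (each a commutative integral domain in which for all a, b, a divides b or b divides a). Let R = Π_{j ∈ J} V_j be the product ring. Then for every prime ideal P of R, the localization R_P of R at P is an integral domain and a valuation ring. -/

import Mathlib

/-- Every local ring of the spectrum of a product of valuation rings is again a valuation
ring: for a product `R = Π j, V j` of valuation rings and a prime ideal `P` of `R`, the
localization `R_P` is an integral domain and a valuation ring. -/
theorem localization_atPrime_of_pi_valuationRing
    {J : Type*} (V : J → Type*) [∀ j, CommRing (V j)] [∀ j, IsDomain (V j)]
    [∀ j, ValuationRing (V j)] (P : Ideal (∀ j, V j)) [P.IsPrime] :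
    ∃ h : IsDomain (Localization.AtPrime P),
      @ValuationRing (Localization.AtPrime P) inferInstance h := by
  classical
  let f : (∀ j, V j) →+* Localization.AtPrime P := algebraMap _ _
  -- image of an idempotent not in P is 1
  have hf : ∀ e : ∀ j, V j, e * e = e → e ∉ P → f e = 1 := by
    intro e he heP
    have hu : IsUnit (f e) :=
      (IsLocalization.AtPrime.isUnit_to_map_iff (Localization.AtPrime P) P e).mpr heP
    obtain ⟨v, hv⟩ := hu.exists_left_inv
    have h2 : f e * f e = f e := by rw [← map_mul, he]
    calc f e = v * f e * f e := by rw [hv, one_mul]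
    _ = v * (f e * f e) := by ring
    _ = v * f e := by rw [h2]
    _ = 1 := hv
  have hcompl : ∀ e : ∀ j, V j, e * e = e → e ∈ P → (1 - e) ∉ P := by
    intro e _ heP h1e
    have h1 : (1 : ∀ j, V j) ∈ P := by simpa using P.add_mem heP h1e
    exact (Ideal.IsPrime.ne_top ‹P.IsPrime›) ((Ideal.eq_top_iff_one P).mpr h1)
  -- divisibility of images of elements of the product ring
  have key : ∀ a b : ∀ j, V j,
      (∃ c, f a * c = f b) ∨ (∃ c, f b * c = f a) := by
    intro a b
    set e : ∀ j, V j := fun j => if a j ∣ b j then 1 else 0 with hedef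
    have he : e * e = e := by
      funext j
      by_cases h : a j ∣ b j <;> simp [Pi.mul_apply, hedef, h]
    by_cases heP : e ∈ P
    · right
      set t : ∀ j, V j := fun j => if h : a j ∣ b j then 0 else
        ((ValuationRing.dvd_total (a j) (b j)).resolve_left h).choose with htdef
      have hbt : b * t = (1 - e) * a := by
        funext j
        by_cases h : a j ∣ b j
        · simp [Pi.mul_apply, Pi.sub_apply, htdef, hedef, h]
        · have hs := ((ValuationRing.dvd_total (a j) (b j)).resolve_left h).choose_spec
          simp only [Pi.mul_apply, Pi.sub_apply, Pi.one_apply, hedef, htdef,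
            if_neg h, dif_neg h, sub_zero, one_mul]
          exact hs.symm
      refine ⟨f t, ?_⟩
      have h3 := congrArg f hbt
      rw [map_mul, map_mul] at h3
      rw [h3, hf _ (by rw [mul_sub, sub_mul, sub_mul, he]; ring) (hcompl e he heP),
        one_mul]
    · left
      set t : ∀ j, V j := fun j => if h : a j ∣ b j then h.choose else 0 with htdef
      have hat : a * t = e * b := by
        funext j
        by_cases h : a j ∣ b j
        · have hs := h.choose_spec
          simp only [Pi.mul_apply, hedef, htdef, dif_pos h, if_pos h, one_mul]
          exact hs.symm
        · simp [Pi.mul_apply, htdef, hedef, h]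
      refine ⟨f t, ?_⟩
      have h3 := congrArg f hat
      rw [map_mul, map_mul] at h3
      rw [h3, hf e he heP, one_mul]
  -- zero divisors
  have dom : ∀ a b : ∀ j, V j, f a * f b = 0 → f a = 0 ∨ f b = 0 := by
    intro a b hab
    rw [← map_mul, IsLocalization.map_eq_zero_iff P.primeCompl] at hab
    obtain ⟨u, hu⟩ := hab
    set e : ∀ j, V j := fun j => if (u : ∀ j, V j) j * a j = 0 then 1 else 0 with hedef
    have he : e * e = e := by
      funext j
      simp only [Pi.mul_apply, hedef]
      by_cases h : (u : ∀ j, V j) j * a j = 0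
      · rw [if_pos h, one_mul]
      · rw [if_neg h, zero_mul]
    by_cases heP : e ∈ P
    · right
      rw [IsLocalization.map_eq_zero_iff P.primeCompl]
      refine ⟨⟨1 - e, hcompl e he heP⟩, ?_⟩
      funext j
      simp only [Pi.mul_apply, Pi.sub_apply, Pi.one_apply, Pi.zero_apply, hedef]
      by_cases h : (u : ∀ j, V j) j * a j = 0
      · rw [if_pos h]; ring
      · have hj : (u : ∀ j, V j) j * a j * b j = 0 := by
          have h4 := congrFun hu j
          simpa [Pi.mul_apply, mul_assoc] using h4
        have hb : b j = 0 := by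
          rcases mul_eq_zero.mp hj with h' | h'
          · exact absurd h' h
          · exact h'
        rw [if_neg h, hb, mul_zero]
    · left
      rw [IsLocalization.map_eq_zero_iff P.primeCompl]
      have hmem : e * (u : ∀ j, V j) ∈ P.primeCompl := by
        intro hm
        rcases ‹P.IsPrime›.mem_or_mem hm with h' | h'
        · exact heP h'
        · exact u.2 h'
      refine ⟨⟨e * (u : ∀ j, V j), hmem⟩, ?_⟩
      funext j
      simp only [Pi.mul_apply, Pi.zero_apply, hedef]
      by_cases h : (u : ∀ j, V j) j * a j = 0
      · rw [if_pos h, one_mul]; exact h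
      · rw [if_neg h, zero_mul, zero_mul]
  -- every element of the localization is a unit multiple of the image of an element
  have surj : ∀ x : Localization.AtPrime P,
      ∃ (a : ∀ j, V j) (w : (Localization.AtPrime P)ˣ), x = f a * w := by
    intro x
    obtain ⟨⟨a, s⟩, hx⟩ := IsLocalization.mk'_surjective P.primeCompl x
    dsimp only at hx
    have hs : IsUnit (f (s : ∀ j, V j)) :=
      (IsLocalization.AtPrime.isUnit_to_map_iff (Localization.AtPrime P) P
        (s : ∀ j, V j)).mpr s.2
    refine ⟨a, hs.unit⁻¹, ?_⟩
    rw [← hx, IsLocalization.mk'_eq_iff_eq_mul]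
    have h5 : ((hs.unit⁻¹ : (Localization.AtPrime P)ˣ) : Localization.AtPrime P) *
        f (s : ∀ j, V j) = 1 := by simp
    rw [mul_assoc, h5, mul_one]
  have hnzd : ∀ x y : Localization.AtPrime P, x * y = 0 → x = 0 ∨ y = 0 := by
    intro x y hxy
    obtain ⟨a, w, rfl⟩ := surj x
    obtain ⟨b, v, rfl⟩ := surj y
    have hab : f a * f b = 0 := by
      have h0 : f a * f b * (w * v : (Localization.AtPrime P)ˣ) = 0 := by
        rw [← hxy]; push_cast; ring
      exact (Units.mul_left_eq_zero (w * v)).mp h0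
    rcases dom a b hab with h | h
    · left; rw [h, zero_mul]
    · right; rw [h, zero_mul]
  have hdom : IsDomain (Localization.AtPrime P) := by
    have : NoZeroDivisors (Localization.AtPrime P) := ⟨fun {x y} h => hnzd x y h⟩
    exact NoZeroDivisors.to_isDomain _
  refine ⟨hdom, @ValuationRing.mk _ _ hdom ⟨?_⟩⟩
  intro x y
  obtain ⟨a, w, rfl⟩ := surj x
  obtain ⟨b, v, rfl⟩ := surj y
  rcases key a b with ⟨c, hc⟩ | ⟨c, hc⟩
  · refine ⟨(w⁻¹ : (Localization.AtPrime P)ˣ) * c * v, Or.inl ?_⟩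
    calc f a * w * ((w⁻¹ : (Localization.AtPrime P)ˣ) * c * v)
        = f a * c * v * (w * (w⁻¹ : (Localization.AtPrime P)ˣ)) := by ring
    _ = f a * c * v := by push_cast; simp
    _ = f b * v := by rw [hc]
  · refine ⟨(v⁻¹ : (Localization.AtPrime P)ˣ) * c * w, Or.inr ?_⟩
    calc f b * v * ((v⁻¹ : (Localization.AtPrime P)ˣ) * c * w)
        = f b * c * w * (v * (v⁻¹ : (Localization.AtPrime P)ˣ)) := by ring
    _ = f b * c * w := by push_cast; simp
    _ = f a * w := by rw [hc]
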